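/- Let P_1,...,P_k be q-dimensional polyhedral convex sets in R^q and suppose a point y lies in the interior of the union ∪_{i=1}^k P_i. If P is another q-dimensional polyhedral convex set such that P ∩ P_i is a proper face of P for every i = 1,...,k, then y ∉ P. -/

import Mathlib

open scoped RealInnerProductSpace

/-- `F` is a face of the convex set `P`. -/
def IsFace {q : ℕ} (P F : Set (EuclideanSpace ℝ (Fin q))) : Prop :=
  F ⊆ P ∧ Convex ℝ F ∧
    ∀ x ∈ P, ∀ y ∈ P, ∀ t : ℝ, 0 < t → t < 1 → t • x + (1 - t) • y ∈ F → x ∈ F ∧ y ∈ F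

/-- `F` is a proper face of `P`: a nonempty face different from `P`. -/
def IsProperFace {q : ℕ} (P F : Set (EuclideanSpace ℝ (Fin q))) : Prop :=
  IsFace P F ∧ F.Nonempty ∧ F ≠ P

/-- A polyhedral convex set: a finite intersection of closed halfspaces. -/
def IsPolyhedral {q : ℕ} (P : Set (EuclideanSpace ℝ (Fin q))) : Prop :=
  ∃ H : Finset (EuclideanSpace ℝ (Fin q) × ℝ), P = {x | ∀ p ∈ H, ⟪p.1, x⟫ ≤ p.2}

/-- A polyhedral subdivision of `ℝ^q`: a finite family of full-dimensional
(`q`-dimensional) polyhedral convex sets covering `ℝ^q`, any two distinct members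
of which intersect in the empty set or in a common proper face. -/
def IsPolyhedralSubdivision {q : ℕ} (𝒞 : Set (Set (EuclideanSpace ℝ (Fin q)))) : Prop :=
  𝒞.Finite ∧
    (∀ P ∈ 𝒞, IsPolyhedral P ∧ (interior P).Nonempty) ∧
    ⋃₀ 𝒞 = Set.univ ∧
    ∀ P ∈ 𝒞, ∀ Q ∈ 𝒞, P ≠ Q →
      P ∩ Q = ∅ ∨ (IsProperFace P (P ∩ Q) ∧ IsProperFace Q (P ∩ Q))

/-- let `P 1, …, P k` be full-dimensional (`q`-dimensional) polyhedral
convex sets in `ℝ^q` and suppose `y` lies in the interior of their union. If `Q` is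
another full-dimensional polyhedral convex set such that `Q ∩ P i` is a proper face
of `Q` for every `i`, then `y ∉ Q`. -/
lemma IsPolyhedral.convex {q : ℕ} {P : Set (EuclideanSpace ℝ (Fin q))}
    (h : IsPolyhedral P) : Convex ℝ P := by
  obtain ⟨H, rfl⟩ := h
  intro x hx y hy a b ha hb hab p hp
  have hx' := hx p hp
  have hy' := hy p hp
  have : ⟪p.1, a • x + b • y⟫ = a * ⟪p.1, x⟫ + b * ⟪p.1, y⟫ := by
    rw [inner_add_right, real_inner_smul_right, real_inner_smul_right]
  rw [this]
  have h1 : a * ⟪p.1, x⟫ ≤ a * p.2 := mul_le_mul_of_nonneg_left hx' ha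
  have h2 : b * ⟪p.1, y⟫ ≤ b * p.2 := mul_le_mul_of_nonneg_left hy' hb
  have h3 : a * p.2 + b * p.2 = p.2 := by rw [← add_mul, hab, one_mul]
  linarith

lemma face_eq_of_interior_mem {q : ℕ} {Q F : Set (EuclideanSpace ℝ (Fin q))}
    (hF : IsFace Q F) {z : EuclideanSpace ℝ (Fin q)}
    (hz : z ∈ interior Q) (hzF : z ∈ F) : F = Q := by
  refine subset_antisymm hF.1 (fun p hp => ?_)
  obtain ⟨ε, hε, hball⟩ := Metric.isOpen_iff.1 isOpen_interior z hz
  set δ : ℝ := ε / (2 * (‖z - p‖ + 1)) with hδdef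
  have hnorm : (0:ℝ) < ‖z - p‖ + 1 := by positivity
  have hδ : 0 < δ := by positivity
  set w : EuclideanSpace ℝ (Fin q) := z + δ • (z - p) with hw
  have hwQ : w ∈ Q := by
    apply interior_subset
    apply hball
    rw [Metric.mem_ball]
    have : dist w z = δ * ‖z - p‖ := by
      rw [dist_eq_norm]
      simp [hw, norm_smul, abs_of_pos hδ]
    rw [this, hδdef]
    rw [div_mul_eq_mul_div, div_lt_iff₀ (by positivity)]
    nlinarith [norm_nonneg (z - p)]
  clear_value δ
  have h1δ : (1:ℝ) + δ ≠ 0 := by positivity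
  set t : ℝ := δ / (1 + δ) with ht
  have ht0 : 0 < t := by positivity
  have ht1 : t < 1 := by
    rw [ht, div_lt_one (by linarith)]; linarith
  have key : t • p + (1 - t) • w = z := by
    rw [hw]
    match_scalars
    · rw [ht]; field_simp; ring
    · rw [ht]; field_simp; ring
  exact (hF.2.2 p hp w hwQ t ht0 ht1 (key ▸ hzF)).1

theorem not_mem_of_inter_proper_faces {q k : ℕ}
    (P : Fin k → Set (EuclideanSpace ℝ (Fin q)))
    (hP : ∀ i, IsPolyhedral (P i) ∧ (interior (P i)).Nonempty)
    (y : EuclideanSpace ℝ (Fin q)) (hy : y ∈ interior (⋃ i, P i))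
    (Q : Set (EuclideanSpace ℝ (Fin q)))
    (hQ : IsPolyhedral Q ∧ (interior Q).Nonempty)
    (hface : ∀ i, IsProperFace Q (Q ∩ P i)) :
    y ∉ Q := by
  intro hyQ
  obtain ⟨x, hx⟩ := hQ.2
  obtain ⟨ε, hε, hball⟩ := Metric.isOpen_iff.1 isOpen_interior y hy
  set t : ℝ := min (1/2) (ε / (2 * (‖x - y‖ + 1))) with htdef
  have hnorm : (0:ℝ) < ‖x - y‖ + 1 := by positivity
  have ht0 : 0 < t := lt_min (by norm_num) (by positivity)
  have ht1 : t < 1 := lt_of_le_of_lt (min_le_left _ _) (by norm_num)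
  set z : EuclideanSpace ℝ (Fin q) := t • x + (1 - t) • y with hz
  have hzint : z ∈ interior Q :=
    hQ.1.convex.combo_interior_closure_mem_interior hx (subset_closure hyQ)
      ht0 (by linarith) (by ring)
  have hzU : z ∈ ⋃ i, P i := by
    apply interior_subset
    apply hball
    rw [Metric.mem_ball, dist_eq_norm]
    have hzy : z - y = t • (x - y) := by
      rw [hz]; module
    rw [hzy, norm_smul, Real.norm_eq_abs, abs_of_pos ht0]
    have h1 : t ≤ ε / (2 * (‖x - y‖ + 1)) := min_le_right _ _
    have h2 : t * ‖x - y‖ ≤ ε / (2 * (‖x - y‖ + 1)) * ‖x - y‖ :=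
      mul_le_mul_of_nonneg_right h1 (norm_nonneg _)
    have h3 : ε / (2 * (‖x - y‖ + 1)) * ‖x - y‖ < ε := by
      rw [div_mul_eq_mul_div, div_lt_iff₀ (by positivity)]
      nlinarith [norm_nonneg (x - y)]
    linarith
  obtain ⟨_, ⟨i, rfl⟩, hzPi⟩ := hzU
  have hzF : z ∈ Q ∩ P i := ⟨interior_subset hzint, hzPi⟩
  exact (hface i).2.2 (face_eq_of_interior_mem (hface i).1 hzint hzF)
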